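/- Let p ∈ ℕ (possibly 0) and a, b ∈ ℝ with a > 0 and b > 0. Then η(2p+1) = (b^{2p+1}/(π·(2p)!)) · Im( ∫_{−∞}^{∞} x^{2p} · Log(1 − e^{ax})/(1 + e^{bx}) dx ), where Log denotes the principal branch of the complex logarithm. -/

import Mathlib

open MeasureTheory Filter

/-- Dirichlet eta function at natural arguments: `η(0)=1/2`, `η(1)=log 2`,
and for `s ≥ 2` the (absolutely convergent) series `∑ (-1)^{n+1}/n^s`. -/
noncomputable def dEta (s : ℕ) : ℝ :=
  if s = 0 then 1/2
  else if s = 1 then Real.log 2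
  else ∑' n : ℕ, (-1 : ℝ)^n / ((n : ℝ)+1)^s

/-- Riemann zeta at natural arguments `s ≥ 2`: `∑ 1/n^s`. -/
noncomputable def rZeta (s : ℕ) : ℝ := ∑' n : ℕ, 1 / ((n : ℝ)+1)^s

/-- `negLi t u = Li_t(-u)` for `t ≥ 1`, `u > 0`, via the Fermi–Dirac integral
representation `Li_t(-u) = -(1/(t-1)!) ∫_0^∞ s^{t-1}/(u⁻¹ e^s + 1) ds`. -/
noncomputable def negLi (t : ℕ) (u : ℝ) : ℝ :=
  -(1 / ((t-1).factorial : ℝ)) * ∫ s in Set.Ioi (0:ℝ), s^(t-1) / (u⁻¹ * Real.exp s + 1)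

/-- Extended harmonic number `H_λ^{(p)} = ∑_{j=1}^∞ (1/j^p - 1/(j+λ)^p)`. -/
noncomputable def Hext (p : ℕ) (lam : ℝ) : ℝ :=
  ∑' j : ℕ, (1/((j:ℝ)+1)^p - 1/(((j:ℝ)+1)+lam)^p)

/-- Alternating linear Euler sum `S^{+-}_{p,t}(r) = ∑_{n=1}^∞ (-1)^{n+1} H_{rn}^{(p)}/n^t`,
as a limit of partial sums. -/
noncomputable def eulerS (p t : ℕ) (r : ℝ) : ℝ :=
  limUnder atTop
    (fun N => ∑ n ∈ Finset.range N, (-1:ℝ)^n * Hext p (r*((n:ℝ)+1)) / ((n:ℝ)+1)^t)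



open Real Set



lemma tendsto_pow_exp_half (t : ℕ) {c : ℝ} (hc : 0 < c) :
    Filter.Tendsto (fun s : ℝ => s ^ t * Real.exp (-(c/2*s))) atTop (nhds 0) := by
  have := (Real.tendsto_pow_mul_exp_neg_atTop_nhds_zero t).comp
    (tendsto_id.const_mul_atTop (half_pos hc))
  have h2 := this.const_mul ((2/c)^t)
  rw [mul_zero] at h2
  refine h2.congr fun s => ?_
  simp only [Function.comp_apply, id_eq]
  rw [← mul_assoc, ← mul_pow]
  have : 2 / c * (c / 2 * s) = s := by field_simp
  rw [this]

lemma integrableOn_pow_exp (t : ℕ) {c : ℝ} (hc : 0 < c) :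
    IntegrableOn (fun s : ℝ => s ^ t * Real.exp (-(c*s))) (Ioi 0) := by
  apply integrable_of_isBigO_exp_neg (half_pos hc)
  · exact ((continuous_pow t).mul
      (Real.continuous_exp.comp (continuous_const.mul continuous_id).neg)).continuousOn
  · apply Asymptotics.IsBigO.of_bound 1
    filter_upwards [(tendsto_pow_exp_half t hc).eventually
      (eventually_le_nhds (by norm_num : (0:ℝ) < 1)), eventually_ge_atTop (0:ℝ)]
      with s hs hs0
    have h1 : -(c*s) = -(c/2*s) + -(c/2*s) := by ring
    rw [Real.norm_eq_abs, Real.norm_eq_abs, abs_of_nonneg (by positivity),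
      abs_of_nonneg (Real.exp_pos _).le, h1, Real.exp_add, ← mul_assoc, one_mul]
    rw [show -(c/2)*s = -(c/2*s) by ring]
    have h2 := Real.exp_pos (-(c/2*s))
    nlinarith [mul_le_of_le_one_left h2.le hs]

lemma integral_pow_exp (t : ℕ) {c : ℝ} (hc : 0 < c) :
    ∫ s in Ioi (0:ℝ), s ^ t * Real.exp (-(c*s)) = (t.factorial : ℝ) / c^(t+1) := by
  have h := Real.integral_rpow_mul_exp_neg_mul_Ioi (a := (t:ℝ)+1) (r := c)
    (by positivity) hc
  rw [show ((t:ℝ)+1) - 1 = (t:ℝ) by ring] at h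
  rw [show ∫ s in Ioi (0:ℝ), s ^ t * Real.exp (-(c*s))
      = ∫ s in Ioi (0:ℝ), s ^ (t:ℝ) * Real.exp (-(c*s)) from
    setIntegral_congr_fun measurableSet_Ioi fun s hs => by
      rw [Real.rpow_natCast]]
  rw [h, Real.Gamma_nat_eq_factorial]
  rw [show ((t:ℝ)+1) = ((t+1 : ℕ) : ℝ) by push_cast; ring, Real.rpow_natCast]
  rw [div_pow, one_pow]
  ring


lemma summable_inv_succ_pow {t : ℕ} (ht : 1 ≤ t) :
    Summable (fun n : ℕ => 1/((n:ℝ)+1)^(t+1)) := by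
  have h := (Real.summable_one_div_nat_pow (p := t+1)).mpr (by omega)
  have h1 := (summable_nat_add_iff 1).mpr h
  exact h1.congr fun n => by push_cast; ring


-- s e^{-s} ≤ 1 - e^{-s} for s ≥ 0
lemma ineq1 {s : ℝ} (hs : 0 ≤ s) : s * Real.exp (-s) ≤ 1 - Real.exp (-s) := by
  have h1 := Real.add_one_le_exp s
  have h2 : Real.exp (-s) * Real.exp s = 1 := by rw [← Real.exp_add]; simp
  nlinarith [Real.exp_pos (-s)]

-- -log u ≤ 2 u^{-1/2} for u > 0
lemma ineq2 {u : ℝ} (hu : 0 < u) : -Real.log u ≤ 2 * u ^ (-(2:ℝ)⁻¹) := by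
  have h1 := Real.log_rpow hu (-(2:ℝ)⁻¹)
  have h2 := Real.log_le_sub_one_of_pos (Real.rpow_pos_of_pos hu (-(2:ℝ)⁻¹))
  have h3 := (Real.rpow_pos_of_pos hu (-(2:ℝ)⁻¹)).le
  nlinarith

-- -log(1-u) ≤ u/(1-u) for 0 ≤ u < 1
lemma ineq3 {u : ℝ} (hu0 : 0 ≤ u) (hu1 : u < 1) : -Real.log (1-u) ≤ u/(1-u) := by
  have h0 : 0 < 1 - u := by linarith
  have h1 := Real.log_le_sub_one_of_pos (inv_pos.mpr h0)
  rw [Real.log_inv] at h1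
  have h2 : (1-u)⁻¹ - 1 = u / (1-u) := by field_simp; ring
  linarith

lemma integrableOn_pow_neglog (t : ℕ) {c : ℝ} (hc : 0 < c) :
    IntegrableOn (fun x : ℝ => x ^ t * (-Real.log (1 - Real.exp (-(c*x))))) (Ioi 0) := by
  have hmeas : Measurable (fun x : ℝ => x ^ t * (-Real.log (1 - Real.exp (-(c*x))))) :=
    (measurable_id.pow_const t).mul
      ((Real.measurable_log.comp
        (measurable_const.sub
          (Real.measurable_exp.comp (measurable_const.mul measurable_id).neg))).neg)
  rw [← Ioc_union_Ioi_eq_Ioi (zero_le_one' ℝ)]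
  apply IntegrableOn.union
  · -- on (0,1]
    set k : ℝ := c * Real.exp (-c) with hk
    have hkpos : 0 < k := by positivity
    have hmaj : IntegrableOn (fun x : ℝ => 2 * k ^ (-(2:ℝ)⁻¹) * x ^ (-(2:ℝ)⁻¹))
        (Ioc (0:ℝ) 1) := by
      have h := intervalIntegral.intervalIntegrable_rpow'
        (a := (0:ℝ)) (b := 1) (r := -(2:ℝ)⁻¹) (by norm_num)
      rw [intervalIntegrable_iff_integrableOn_Ioc_of_le zero_le_one] at h
      exact h.const_mul _
    apply Integrable.mono' hmaj (hmeas.aestronglyMeasurable.restrict)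
    rw [ae_restrict_iff' measurableSet_Ioc]
    filter_upwards with x hx
    obtain ⟨hx0, hx1⟩ := hx
    have hcx : 0 < c * x := by positivity
    have he1 : Real.exp (-(c*x)) < 1 := Real.exp_lt_one_iff.mpr (by linarith)
    have he0 : 0 < 1 - Real.exp (-(c*x)) := by linarith
    have hL0 : 0 ≤ -Real.log (1 - Real.exp (-(c*x))) := by
      rw [neg_nonneg]
      exact Real.log_nonpos he0.le (by nlinarith [Real.exp_pos (-(c*x))])
    have hlow : k * x ≤ 1 - Real.exp (-(c*x)) := by
      have h1 := ineq1 hcx.le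
      have h2 : Real.exp (-c) ≤ Real.exp (-(c*x)) :=
        Real.exp_le_exp.mpr (by nlinarith)
      calc k * x = c * x * Real.exp (-c) := by rw [hk]; ring
        _ ≤ c * x * Real.exp (-(c*x)) := by nlinarith
        _ ≤ 1 - Real.exp (-(c*x)) := h1
    have hrpow : (1 - Real.exp (-(c*x))) ^ (-(2:ℝ)⁻¹) ≤ (k * x) ^ (-(2:ℝ)⁻¹) :=
      Real.rpow_le_rpow_of_nonpos (by positivity) hlow (by norm_num)
    have hmul : (k * x) ^ (-(2:ℝ)⁻¹) = k ^ (-(2:ℝ)⁻¹) * x ^ (-(2:ℝ)⁻¹) :=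
      Real.mul_rpow hkpos.le hx0.le
    have hxt : x ^ t ≤ 1 := pow_le_one₀ hx0.le hx1
    have hxt0 : 0 ≤ x ^ t := by positivity
    rw [Real.norm_eq_abs, abs_of_nonneg (mul_nonneg hxt0 hL0)]
    have h5 := ineq2 he0
    calc x ^ t * (-Real.log (1 - Real.exp (-(c*x))))
        ≤ 1 * (-Real.log (1 - Real.exp (-(c*x)))) := by nlinarith
      _ ≤ 2 * (1 - Real.exp (-(c*x))) ^ (-(2:ℝ)⁻¹) := by linarith
      _ ≤ 2 * (k ^ (-(2:ℝ)⁻¹) * x ^ (-(2:ℝ)⁻¹)) := by rw [← hmul]; linarith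
      _ = 2 * k ^ (-(2:ℝ)⁻¹) * x ^ (-(2:ℝ)⁻¹) := by ring
  · -- on (1,∞)
    have hmaj : IntegrableOn
        (fun x : ℝ => (1 - Real.exp (-c))⁻¹ * (x ^ t * Real.exp (-(c*x)))) (Ioi 1) := by
      have h0 : IntegrableOn
          (fun x : ℝ => (1 - Real.exp (-c))⁻¹ * (x ^ t * Real.exp (-(c*x)))) (Ioi 0) :=
        (integrableOn_pow_exp t hc).const_mul _
      exact h0.mono_set (Ioi_subset_Ioi zero_le_one)
    apply Integrable.mono' hmaj (hmeas.aestronglyMeasurable.restrict)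
    rw [ae_restrict_iff' measurableSet_Ioi]
    filter_upwards with x hx
    have hx1 : (1:ℝ) < x := hx
    have hx0 : (0:ℝ) < x := by linarith
    have hcx : 0 < c * x := by positivity
    have he1 : Real.exp (-(c*x)) < 1 := Real.exp_lt_one_iff.mpr (by linarith)
    have he0 : 0 < 1 - Real.exp (-(c*x)) := by linarith
    have hL0 : 0 ≤ -Real.log (1 - Real.exp (-(c*x))) := by
      rw [neg_nonneg]
      exact Real.log_nonpos he0.le (by nlinarith [Real.exp_pos (-(c*x))])
    have hec : Real.exp (-(c*x)) ≤ Real.exp (-c) := Real.exp_le_exp.mpr (by nlinarith)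
    have hec1 : Real.exp (-c) < 1 := Real.exp_lt_one_iff.mpr (by linarith)
    have h3 := ineq3 (Real.exp_pos (-(c*x))).le he1
    have h4 : Real.exp (-(c*x)) / (1 - Real.exp (-(c*x)))
        ≤ (1 - Real.exp (-c))⁻¹ * Real.exp (-(c*x)) := by
      rw [div_le_iff₀ he0, mul_comm ((1 - Real.exp (-c))⁻¹) _, mul_assoc]
      have hi : (1:ℝ) ≤ (1 - Real.exp (-c))⁻¹ * (1 - Real.exp (-(c*x))) := by
        rw [inv_mul_eq_div, le_div_iff₀ (by linarith), one_mul]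
        linarith
      exact le_mul_of_one_le_right (Real.exp_pos _).le hi
    rw [Real.norm_eq_abs, abs_of_nonneg (mul_nonneg (by positivity) hL0)]
    calc x ^ t * (-Real.log (1 - Real.exp (-(c*x))))
        ≤ x ^ t * (Real.exp (-(c*x)) / (1 - Real.exp (-(c*x)))) := by
          apply mul_le_mul_of_nonneg_left _ (by positivity)
          linarith
      _ ≤ x ^ t * ((1 - Real.exp (-c))⁻¹ * Real.exp (-(c*x))) := by
          apply mul_le_mul_of_nonneg_left h4 (by positivity)
      _ = (1 - Real.exp (-c))⁻¹ * (x ^ t * Real.exp (-(c*x))) := by ring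

lemma integral_fermi_zero :
    ∫ s in Ioi (0:ℝ), 1 / (1 + Real.exp s) = Real.log 2 := by
  have key : ∀ s : ℝ, HasDerivAt (fun s => -Real.log (1 + Real.exp (-s)))
      (1 / (1 + Real.exp s)) s := by
    intro s
    have h1 : HasDerivAt (fun s : ℝ => 1 + Real.exp (-s)) (-Real.exp (-s)) s := by
      simpa using (((hasDerivAt_id s).neg).exp.const_add 1)
    have h2 : HasDerivAt (fun s => -Real.log (1 + Real.exp (-s)))
        (-(-Real.exp (-s) / (1 + Real.exp (-s)))) s := (h1.log (by positivity)).neg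
    convert h2 using 1
    rw [neg_div, neg_neg, div_eq_div_iff (by positivity) (by positivity)]
    have h3 : Real.exp (-s) * Real.exp s = 1 := by
      rw [← Real.exp_add]; simp
    linear_combination -h3
  have htend : Filter.Tendsto (fun s : ℝ => -Real.log (1 + Real.exp (-s))) atTop
      (nhds 0) := by
    have h1 : Filter.Tendsto (fun s : ℝ => 1 + Real.exp (-s)) atTop (nhds 1) := by
      have := Real.tendsto_exp_atBot.comp tendsto_neg_atTop_atBot
      simpa using (this.const_add 1)
    have h2 := ((Real.continuousAt_log one_ne_zero).tendsto.comp h1).neg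
    simpa using h2
  have hint : IntegrableOn (fun s : ℝ => 1 / (1 + Real.exp s)) (Ioi 0) := by
    apply Integrable.mono' (exp_neg_integrableOn_Ioi 0 one_pos)
    · exact (continuous_const.div (continuous_const.add Real.continuous_exp)
        (fun s => (by positivity : (0:ℝ) < 1 + Real.exp s).ne')).aestronglyMeasurable
    · filter_upwards with s
      rw [Real.norm_eq_abs, abs_of_nonneg (by positivity), neg_one_mul, Real.exp_neg,
        div_le_iff₀ (by positivity)]
      rw [inv_mul_eq_div, le_div_iff₀ (Real.exp_pos _)]
      nlinarith [Real.exp_pos s]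
  have h := integral_Ioi_of_hasDerivAt_of_tendsto' (f' := fun s => 1 / (1 + Real.exp s))
    (a := 0) (fun x _ => key x) hint htend
  rw [h]
  norm_num

lemma integral_fermi_pos (t : ℕ) (ht : 1 ≤ t) :
    ∫ s in Ioi (0:ℝ), s ^ t / (1 + Real.exp s)
      = (t.factorial : ℝ) * ∑' n : ℕ, (-1:ℝ)^n / ((n:ℝ)+1)^(t+1) := by
  set μ := volume.restrict (Ioi (0:ℝ)) with hμ
  set F : ℕ → ℝ → ℝ := fun n s => (-1:ℝ)^n * (s ^ t * Real.exp (-(((n:ℝ)+1)*s))) with hF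
  have hFint : ∀ n, Integrable (F n) μ := fun n =>
    ((integrableOn_pow_exp t (c := (n:ℝ)+1) (by positivity)).const_mul _)
  have hnorm : ∀ n, ∫ s, ‖F n s‖ ∂μ = (t.factorial : ℝ) / ((n:ℝ)+1)^(t+1) := by
    intro n
    rw [← integral_pow_exp t (c := (n:ℝ)+1) (by positivity)]
    refine setIntegral_congr_fun measurableSet_Ioi fun s hs => ?_
    rw [hF]
    simp only [norm_mul, norm_pow, norm_neg, norm_one, one_pow, one_mul, Real.norm_eq_abs]
    rw [abs_of_nonneg (le_of_lt hs), abs_of_nonneg (Real.exp_pos _).le]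
  have hsum : Summable fun n : ℕ => ∫ s, ‖F n s‖ ∂μ := by
    simp_rw [hnorm]
    exact ((summable_inv_succ_pow ht).mul_left (t.factorial : ℝ)).congr
      fun n => by rw [mul_one_div]
  have hswap := MeasureTheory.integral_tsum_of_summable_integral_norm hFint hsum
  have hptwise : ∀ s ∈ Ioi (0:ℝ), (∑' n : ℕ, F n s) = s ^ t / (1 + Real.exp s) := by
    intro s hs
    have hs0 : (0:ℝ) < s := hs
    have hlt : ‖-Real.exp (-s)‖ < 1 := by
      rw [norm_neg, Real.norm_eq_abs, abs_of_nonneg (Real.exp_pos _).le]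
      exact Real.exp_lt_one_iff.mpr (by simpa using hs0)
    have hgeo := tsum_geometric_of_norm_lt_one hlt
    have hFn : ∀ n : ℕ, F n s = (s ^ t * Real.exp (-s)) * (-Real.exp (-s))^n := by
      intro n
      have hexp : Real.exp (-(((n:ℝ)+1)*s)) = Real.exp (-s) * Real.exp ((n:ℕ) * (-s)) := by
        rw [← Real.exp_add]; push_cast; ring_nf
      rw [hF]
      simp only
      rw [hexp, neg_pow, Real.exp_nat_mul]
      ring
    rw [tsum_congr hFn, tsum_mul_left, hgeo, sub_neg_eq_add]
    have e2 : (0:ℝ) < 1 + Real.exp s := by positivity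
    rw [Real.exp_neg]
    have hne := Real.exp_ne_zero s
    field_simp
    ring
  calc ∫ s in Ioi (0:ℝ), s ^ t / (1 + Real.exp s)
      = ∫ s, (∑' n : ℕ, F n s) ∂μ :=
        (setIntegral_congr_fun measurableSet_Ioi (fun s hs => (hptwise s hs).symm))
    _ = ∑' n : ℕ, ∫ s, F n s ∂μ := hswap.symm
    _ = ∑' n : ℕ, (-1:ℝ)^n * ((t.factorial : ℝ) / ((n:ℝ)+1)^(t+1)) := by
        refine tsum_congr fun n => ?_
        rw [hF]
        simp only
        rw [integral_const_mul, hμ,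
          integral_pow_exp t (c := (n:ℝ)+1) (by positivity)]
    _ = (t.factorial : ℝ) * ∑' n : ℕ, (-1:ℝ)^n / ((n:ℝ)+1)^(t+1) := by
        rw [← tsum_mul_left]
        exact tsum_congr fun n => by ring


lemma integral_fermi (t : ℕ) :
    ∫ s in Ioi (0:ℝ), s ^ t / (1 + Real.exp s) = (t.factorial : ℝ) * dEta (t+1) := by
  match t with
  | 0 =>
    rw [show (fun s : ℝ => s ^ 0 / (1 + Real.exp s)) = fun s : ℝ => 1 / (1 + Real.exp s) by
      funext s; rw [pow_zero]]
    rw [integral_fermi_zero]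
    simp [dEta]
  | (t+1) =>
    rw [integral_fermi_pos (t+1) (by omega)]
    have h : dEta (t+1+1) = ∑' n : ℕ, (-1:ℝ)^n / ((n:ℝ)+1)^(t+1+1) := by
      rw [dEta]; norm_num
    rw [h]

lemma integrableOn_comp_neg_Iio {F : ℝ → ℝ} (hF : IntegrableOn F (Ioi (0:ℝ))) :
    IntegrableOn (fun x => F (-x)) (Iio (0:ℝ)) := by
  have h1 : Integrable ((Ioi (0:ℝ)).indicator F) :=
    (integrable_indicator_iff measurableSet_Ioi).mpr hF
  have h2 := (integrable_comp_mul_left_iff ((Ioi (0:ℝ)).indicator F)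
    (by norm_num : (-1:ℝ) ≠ 0)).mpr h1
  rw [← integrable_indicator_iff measurableSet_Iio]
  have h3 : (fun x => (Ioi (0:ℝ)).indicator F (-1 * x))
      = (Iio (0:ℝ)).indicator (fun x => F (-x)) := by
    funext x
    simp only [Set.indicator, mem_Ioi, mem_Iio]
    rw [show (-1:ℝ)*x = -x by ring]
    simp [neg_pos]
  rwa [h3] at h2

lemma norm_clog_le (z : ℂ) : ‖Complex.log z‖ ≤ |Real.log ‖z‖| + Real.pi := by
  refine (Complex.norm_le_abs_re_add_abs_im _).trans ?_
  rw [Complex.log_re, Complex.log_im]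
  have := Complex.abs_arg_le_pi z
  linarith

lemma g_meas (a b : ℝ) (t : ℕ) :
    Measurable (fun x : ℝ => (x:ℂ)^t * Complex.log (1 - (Real.exp (a*x) : ℂ)) /
      (1 + (Real.exp (b*x) : ℂ))) := by
  have h1 : Measurable fun x : ℝ => ((Real.exp (a*x) : ℝ) : ℂ) :=
    Complex.measurable_ofReal.comp (Real.measurable_exp.comp (measurable_id.const_mul a))
  have h2 : Measurable fun x : ℝ => ((Real.exp (b*x) : ℝ) : ℂ) :=
    Complex.measurable_ofReal.comp (Real.measurable_exp.comp (measurable_id.const_mul b))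
  exact (((Complex.measurable_ofReal.comp measurable_id).pow_const t).mul
    (Complex.measurable_log.comp (measurable_const.sub h1))).div
    (measurable_const.add h2)

lemma g_integrable {a b : ℝ} (ha : 0 < a) (hb : 0 < b) (t : ℕ) :
    Integrable (fun x : ℝ => (x:ℂ)^t * Complex.log (1 - (Real.exp (a*x) : ℂ)) /
      (1 + (Real.exp (b*x) : ℂ))) := by
  set g : ℝ → ℂ := fun x => (x:ℂ)^t * Complex.log (1 - (Real.exp (a*x) : ℂ)) /
      (1 + (Real.exp (b*x) : ℂ)) with hg
  have hmeas : AEStronglyMeasurable g volume := (g_meas a b t).aestronglyMeasurable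
  have hIoi : IntegrableOn g (Ioi 0) := by
    have hmaj : IntegrableOn (fun x : ℝ =>
        x^t * (-Real.log (1 - Real.exp (-(a*x)))) + a*(x^(t+1) * Real.exp (-(b*x)))
          + Real.pi*(x^t * Real.exp (-(b*x)))) (Ioi 0) :=
      ((integrableOn_pow_neglog t ha).add
        ((integrableOn_pow_exp (t+1) hb).const_mul a)).add
        ((integrableOn_pow_exp t hb).const_mul Real.pi)
    apply Integrable.mono' hmaj hmeas.restrict
    rw [ae_restrict_iff' measurableSet_Ioi]
    filter_upwards with x hx
    have hx0 : (0:ℝ) < x := hx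
    have hax : 0 < a*x := by positivity
    have hxt0 : (0:ℝ) ≤ x^t := by positivity
    have hE1 : (1:ℝ) < Real.exp (a*x) := by
      have := Real.exp_lt_exp.mpr hax
      rwa [Real.exp_zero] at this
    have h1me : 0 < 1 - Real.exp (-(a*x)) := by
      have : Real.exp (-(a*x)) < 1 := Real.exp_lt_one_iff.mpr (by linarith)
      linarith
    set L : ℝ := -Real.log (1 - Real.exp (-(a*x))) with hLdef
    have hL0 : 0 ≤ L := by
      rw [hLdef, neg_nonneg]
      exact Real.log_nonpos h1me.le (by nlinarith [Real.exp_pos (-(a*x))])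
    have hlogeq : Real.log (Real.exp (a*x) - 1) = a*x + Real.log (1 - Real.exp (-(a*x))) := by
      have hfac : Real.exp (a*x) - 1 = Real.exp (a*x) * (1 - Real.exp (-(a*x))) := by
        rw [mul_sub, mul_one, ← Real.exp_add, add_neg_cancel, Real.exp_zero]
      rw [hfac, Real.log_mul (Real.exp_ne_zero _) (ne_of_gt h1me), Real.log_exp]
    have hgx : g x = (((x^t : ℝ)) : ℂ) * Complex.log (((1 - Real.exp (a*x) : ℝ)) : ℂ) /
        (((1 + Real.exp (b*x) : ℝ)) : ℂ) := by
      rw [hg]; push_cast; ring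
    rw [hgx, norm_div, norm_mul]
    have hnx : ‖((x^t : ℝ) : ℂ)‖ = x^t := by
      rw [Complex.norm_real, Real.norm_eq_abs, abs_of_nonneg hxt0]
    have hnd : ‖((1 + Real.exp (b*x) : ℝ) : ℂ)‖ = 1 + Real.exp (b*x) := by
      rw [Complex.norm_real, Real.norm_eq_abs, abs_of_nonneg (by positivity)]
    rw [hnx, hnd]
    have habs : ‖(((1 - Real.exp (a*x) : ℝ)) : ℂ)‖ = Real.exp (a*x) - 1 := by
      rw [Complex.norm_real, Real.norm_eq_abs, abs_of_neg (by linarith)]; ring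
    have hlogb : ‖Complex.log (((1 - Real.exp (a*x) : ℝ)) : ℂ)‖ ≤ a*x + L + Real.pi := by
      refine (norm_clog_le _).trans ?_
      rw [habs, hlogeq]
      have hrw : Real.log (1 - Real.exp (-(a*x))) = -L := by rw [hLdef]; ring
      rw [hrw]
      have : |a*x + -L| ≤ a*x + L := by
        rw [abs_le]; constructor <;> linarith
      linarith
    have hEp := Real.exp_pos (b*x)
    have he2p := Real.exp_pos (-(b*x))
    have he2E : Real.exp (-(b*x)) * Real.exp (b*x) = 1 := by
      rw [← Real.exp_add]; simp
    calc x^t * ‖Complex.log (((1 - Real.exp (a*x) : ℝ)) : ℂ)‖ / (1 + Real.exp (b*x))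
        ≤ x^t * (a*x + L + Real.pi) / (1 + Real.exp (b*x)) := by gcongr
      _ = x^t*L/(1+Real.exp (b*x)) + x^t*(a*x+Real.pi)/(1+Real.exp (b*x)) := by ring
      _ ≤ x^t*L + x^t*(a*x+Real.pi)*Real.exp (-(b*x)) := by
          have t1 : x^t*L/(1+Real.exp (b*x)) ≤ x^t*L :=
            div_le_self (mul_nonneg hxt0 hL0) (by linarith)
          have t2 : x^t*(a*x+Real.pi)/(1+Real.exp (b*x))
              ≤ x^t*(a*x+Real.pi)*Real.exp (-(b*x)) := by
            rw [div_le_iff₀ (by positivity)]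
            have hA : 0 ≤ x^t*(a*x+Real.pi) :=
              mul_nonneg hxt0 (by positivity)
            nlinarith [mul_nonneg hA he2p.le]
          linarith
      _ ≤ x^t*L + a*(x^(t+1) * Real.exp (-(b*x))) + Real.pi*(x^t * Real.exp (-(b*x))) := by
          have : x^t*(a*x+Real.pi)*Real.exp (-(b*x))
              = a*(x^(t+1) * Real.exp (-(b*x))) + Real.pi*(x^t * Real.exp (-(b*x))) := by
            ring
          linarith
  have hIio : IntegrableOn g (Iio 0) := by
    have hmaj := integrableOn_comp_neg_Iio (integrableOn_pow_neglog t ha)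
    apply Integrable.mono' hmaj hmeas.restrict
    rw [ae_restrict_iff' measurableSet_Iio]
    filter_upwards with x hx
    have hx0 : x < 0 := hx
    have hax : a*x < 0 := mul_neg_of_pos_of_neg ha hx0
    have he1 : Real.exp (a*x) < 1 := Real.exp_lt_one_iff.mpr hax
    have h1me : 0 < 1 - Real.exp (a*x) := by linarith
    have hlognp : Real.log (1 - Real.exp (a*x)) ≤ 0 :=
      Real.log_nonpos h1me.le (by nlinarith [Real.exp_pos (a*x)])
    have hgx : g x = (((x^t * Real.log (1 - Real.exp (a*x)) / (1 + Real.exp (b*x)) : ℝ)) : ℂ) := by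
      rw [hg]
      simp only
      rw [Complex.ofReal_div, Complex.ofReal_mul, Complex.ofReal_log h1me.le]
      push_cast; ring
    rw [hgx, Complex.norm_real, Real.norm_eq_abs, abs_div, abs_mul]
    rw [abs_of_nonneg (show (0:ℝ) ≤ 1 + Real.exp (b*x) by positivity),
      abs_of_nonpos hlognp]
    have hxabs : |x^t| = (-x)^t := by
      rw [abs_pow, abs_of_neg hx0]
    rw [hxabs]
    rw [show -(a * -x) = a*x by ring]
    exact div_le_self (mul_nonneg (pow_nonneg (by linarith) t) (by linarith))
      (by nlinarith [Real.exp_pos (b*x)])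
  have hIci : IntegrableOn g (Ici 0) := Iff.mpr integrableOn_Ici_iff_integrableOn_Ioi hIoi
  have hu := hIio.union hIci
  rw [Iio_union_Ici] at hu
  exact integrableOn_univ.mp hu

lemma g_im_ae {a b : ℝ} (ha : 0 < a) (hb : 0 < b) (t : ℕ) :
    (fun x : ℝ => ((x:ℂ)^t * Complex.log (1 - (Real.exp (a*x) : ℂ)) /
      (1 + (Real.exp (b*x) : ℂ))).im)
      =ᵐ[volume] (Ioi (0:ℝ)).indicator
        (fun x => Real.pi * (x^t / (1 + Real.exp (b*x)))) := by
  have h0 : ∀ᵐ x : ℝ, x ≠ 0 := by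
    rw [ae_iff]
    have h1 : {x : ℝ | ¬ x ≠ 0} = {0} := by ext x; simp
    rw [h1]
    exact measure_singleton 0
  filter_upwards [h0] with x hx
  rcases hx.lt_or_gt with hneg | hpos
  · have hax : a*x < 0 := mul_neg_of_pos_of_neg ha hneg
    have h1me : 0 < 1 - Real.exp (a*x) := by
      have := Real.exp_lt_one_iff.mpr hax; linarith
    have hgx : ((x:ℂ)^t * Complex.log (1 - (Real.exp (a*x) : ℂ)) /
        (1 + (Real.exp (b*x) : ℂ)))
        = (((x^t * Real.log (1 - Real.exp (a*x)) / (1 + Real.exp (b*x)) : ℝ)) : ℂ) := by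
      rw [Complex.ofReal_div, Complex.ofReal_mul, Complex.ofReal_log h1me.le]
      push_cast; ring
    rw [hgx, Complex.ofReal_im,
      indicator_of_notMem (by simp only [mem_Ioi, not_lt]; linarith)]
  · have hax : 0 < a*x := by positivity
    have hE1 : (1:ℝ) < Real.exp (a*x) := by
      have := Real.exp_lt_exp.mpr hax; rwa [Real.exp_zero] at this
    have hneg2 : (1 - Real.exp (a*x) : ℝ) < 0 := by linarith
    have hgx : ((x:ℂ)^t * Complex.log (1 - (Real.exp (a*x) : ℂ)) /
        (1 + (Real.exp (b*x) : ℂ)))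
        = (((x^t / (1 + Real.exp (b*x)) : ℝ)) : ℂ)
            * Complex.log (((1 - Real.exp (a*x) : ℝ)) : ℂ) := by
      push_cast; ring
    rw [hgx, indicator_of_mem (show x ∈ Ioi 0 from hpos)]
    simp only [Complex.mul_im, Complex.ofReal_re, Complex.ofReal_im, zero_mul, add_zero]
    rw [Complex.log_im, Complex.arg_ofReal_of_neg hneg2]
    ring


theorem stmt14 (p : ℕ) (a b : ℝ) (ha : 0 < a) (hb : 0 < b) :
    dEta (2*p+1) =
      (b^(2*p+1) / (Real.pi * ((2*p).factorial : ℝ))) *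
        (∫ x : ℝ, (x:ℂ)^(2*p) * Complex.log (1 - (Real.exp (a*x) : ℂ)) /
          (1 + (Real.exp (b*x) : ℂ))).im := by

  have hint := g_integrable ha hb (2*p)
  have him := integral_im hint
  simp only [RCLike.im_to_complex] at him
  rw [integral_congr_ae (g_im_ae ha hb (2*p)), integral_indicator measurableSet_Ioi,
    integral_const_mul] at him
  have hs := integral_comp_mul_left_Ioi (fun y : ℝ => y^(2*p) / (1 + Real.exp y)) 0 hb
  rw [mul_zero, integral_fermi (2*p), smul_eq_mul] at hs
  have hpow : ∫ x in Ioi (0:ℝ), (b*x)^(2*p) / (1 + Real.exp (b*x))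
      = b^(2*p) * ∫ x in Ioi (0:ℝ), x^(2*p) / (1 + Real.exp (b*x)) := by
    rw [← integral_const_mul]
    exact setIntegral_congr_fun measurableSet_Ioi fun x hx => by rw [mul_pow]; ring
  rw [hpow] at hs
  rw [← him]
  have hbne : b ≠ 0 := hb.ne'
  have hbpow : (b:ℝ)^(2*p) ≠ 0 := pow_ne_zero _ hbne
  have hfac : (((2*p).factorial : ℕ) : ℝ) ≠ 0 :=
    Nat.cast_ne_zero.mpr (Nat.factorial_ne_zero _)
  have hI : ∫ x in Ioi (0:ℝ), x^(2*p) / (1 + Real.exp (b*x))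
      = b⁻¹ * (((2*p).factorial : ℝ) * dEta (2*p+1)) / b^(2*p) := by
    rw [eq_div_iff hbpow, mul_comm]
    exact hs
  rw [hI]
  have hpi := Real.pi_ne_zero
  field_simp
  ring
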